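/- TQt-SVD existence: every Lth-order quaternion tensor A ∈ H^{N1×N2×N3×…×NL} admits a decomposition A = U ⋆_QT D ⋆_QT V^H, where U ∈ H^{N1×N1×N3×…×NL} and V ∈ H^{N2×N2×N3×…×NL} are unitary quaternion tensors and D ∈ H^{N1×N2×N3×…×NL} is f-diagonal (every frontal slice of D, equivalently of D̂, is a diagonal matrix). -/

import Mathlib

open scoped Quaternion
open Matrix

noncomputable section

/-- An `L`th-order quaternion tensor, modeled as a family of frontal-slice
quaternion matrices indexed by the multi-index `ν = (n₃,…,n_L) : ι`. -/
abbrev QT (ι : Type*) (m n : ℕ) := ι → Matrix (Fin m) (Fin n) ℍ[ℝ]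

variable {ι : Type*} [Fintype ι] [DecidableEq ι]

/-- The hat transform `Â = A ×₃ T₃ ⋯ ×_L T_L`, with `T` the combined invertible
quaternion transform acting on the tube fibers. -/
def hatT (T : Matrix ι ι ℍ[ℝ]) {m n : ℕ} (A : QT ι m n) : QT ι m n :=
  fun ν i j => ∑ μ, T ν μ * A μ i j

/-- The facewise product `⋆_QF`: slice-wise quaternion matrix product. -/
def qf {m p n : ℕ} (A : QT ι m p) (B : QT ι p n) : QT ι m n :=
  fun ν => A ν * B ν

/-- The `⋆_QT` product; `T` is the combined transform and `S` its inverse. -/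
def qt (T S : Matrix ι ι ℍ[ℝ]) {m p n : ℕ} (A : QT ι m p) (B : QT ι p n) : QT ι m n :=
  hatT S (qf (hatT T A) (hatT T B))

/-- The identity quaternion tensor: every transform-domain slice is `I_P`. -/
def qtId (S : Matrix ι ι ℍ[ℝ]) (p : ℕ) : QT ι p p := hatT S (fun _ => 1)

/-- Conjugate transpose, defined slice-wise in the transform domain. -/
def qtH (T S : Matrix ι ι ℍ[ℝ]) {m n : ℕ} (A : QT ι m n) : QT ι n m :=
  hatT S (fun ν => (hatT T A ν)ᴴ)

/-- A quaternion matrix is unitary. -/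
def qUnitaryM {p : Type*} [Fintype p] [DecidableEq p] (Q : Matrix p p ℍ[ℝ]) : Prop :=
  Qᴴ * Q = 1 ∧ Q * Qᴴ = 1

/-- A quaternion tensor is unitary for the `⋆_QT` product. -/
def qtUnitary (T S : Matrix ι ι ℍ[ℝ]) {p : ℕ} (U : QT ι p p) : Prop :=
  qt T S (qtH T S U) U = qtId S p ∧ qt T S U (qtH T S U) = qtId S p

/-- Frobenius norm of a quaternion tensor. -/
def frob {m n : ℕ} (A : QT ι m n) : ℝ :=
  Real.sqrt (∑ ν, ∑ i, ∑ j, ‖A ν i j‖ ^ 2)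

/-- Frobenius norm of a quaternion matrix. -/
def frobM {m n : ℕ} (M : Matrix (Fin m) (Fin n) ℍ[ℝ]) : ℝ :=
  Real.sqrt (∑ i, ∑ j, ‖M i j‖ ^ 2)

/-- The `k`-th diagonal tube `D(k,k,:,…,:)` of a quaternion tensor. -/
def diagTube {m n : ℕ} (D : QT ι m n) (k : ℕ) : ι → ℍ[ℝ] :=
  fun ν => if h : k < m ∧ k < n then D ν ⟨k, h.1⟩ ⟨k, h.2⟩ else 0

/-- Frobenius norm of the `k`-th diagonal tube. -/
def tubeNorm {m n : ℕ} (D : QT ι m n) (k : ℕ) : ℝ :=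
  Real.sqrt (∑ ν, ‖diagTube D k ν‖ ^ 2)

/-- The TQt-rank: the number of nonzero diagonal tubes of the f-diagonal factor. -/
def tqtRank {m n : ℕ} (D : QT ι m n) : ℕ :=
  ((Finset.range (min m n)).filter (fun k => 0 < tubeNorm D k)).card

/-- Rank of a quaternion matrix: dimension of the span of its columns as a
right `ℍ`-module (i.e. a module over `ℍᵐᵒᵖ`). -/
def qrank {m n : ℕ} (M : Matrix (Fin m) (Fin n) ℍ[ℝ]) : ℕ :=
  Module.finrank ℍ[ℝ]ᵐᵒᵖ
    (Submodule.span ℍ[ℝ]ᵐᵒᵖ (Set.range fun j : Fin n => fun i : Fin m => M i j))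

/-- Real diagonal quaternion matrix with diagonal entries `σ 0, σ 1, …`. -/
def realDiag (m n : ℕ) (σ : ℕ → ℝ) : Matrix (Fin m) (Fin n) ℍ[ℝ] :=
  fun i j => if (i : ℕ) = (j : ℕ) then ((σ (i : ℕ) : ℝ) : ℍ[ℝ]) else 0

/-- Truncated real diagonal matrix keeping only the first `s` diagonal entries. -/
def realDiagTrunc (m n : ℕ) (σ : ℕ → ℝ) (s : ℕ) : Matrix (Fin m) (Fin n) ℍ[ℝ] :=
  fun i j => if (i : ℕ) = (j : ℕ) ∧ (i : ℕ) < s then ((σ (i : ℕ) : ℝ) : ℍ[ℝ]) else 0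


namespace QSVD

/-- Quaternionic inner product, conjugate-linear in the first slot. -/
def qip {m : ℕ} (x y : Fin m → ℍ[ℝ]) : ℍ[ℝ] := ∑ i, star (x i) * y i

lemma qip_star {m : ℕ} (x y : Fin m → ℍ[ℝ]) : star (qip x y) = qip y x := by
  simp [qip, star_sum, mul_comm]

lemma qip_self {m : ℕ} (x : Fin m → ℍ[ℝ]) :
    qip x x = (((∑ i, ‖x i‖ ^ 2 : ℝ)) : ℍ[ℝ]) := by
  have : ∀ i : Fin m, star (x i) * x i = ((‖x i‖ ^ 2 : ℝ) : ℍ[ℝ]) := fun i => by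
    rw [Quaternion.star_mul_self, Quaternion.normSq_eq_norm_mul_self, sq]
  simp only [qip, this]
  rw [← Quaternion.algebraMap_def, map_sum]

lemma qip_self_re {m : ℕ} (x : Fin m → ℍ[ℝ]) :
    (qip x x).re = ∑ i, ‖x i‖ ^ 2 := by rw [qip_self, Quaternion.re_coe]

lemma qip_self_re_nonneg {m : ℕ} (x : Fin m → ℍ[ℝ]) : 0 ≤ (qip x x).re := by
  rw [qip_self_re]; positivity

lemma qip_self_eq_zero {m : ℕ} (x : Fin m → ℍ[ℝ]) : qip x x = 0 ↔ x = 0 := by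
  constructor
  · intro h
    funext i
    have h2 : (∑ i, ‖x i‖ ^ 2 : ℝ) = 0 := by
      apply Quaternion.coe_injective (R := ℝ)
      rw [← qip_self x, h, Quaternion.coe_zero]
    have hz : ‖x i‖ ^ 2 = 0 := by
      have h3 : ∀ j ∈ Finset.univ, (0:ℝ) ≤ ‖x j‖ ^ 2 := fun j _ => by positivity
      exact (Finset.sum_eq_zero_iff_of_nonneg h3).mp h2 i (Finset.mem_univ i)
    simpa using pow_eq_zero_iff (n := 2) (by norm_num) |>.mp hz
  · intro h; simp [h, qip]

lemma qip_self_re_pos {m : ℕ} {x : Fin m → ℍ[ℝ]} (hx : x ≠ 0) : 0 < (qip x x).re := by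
  rcases lt_or_eq_of_le (qip_self_re_nonneg x) with h | h
  · exact h
  · exfalso
    apply hx
    rw [← qip_self_eq_zero]
    have := qip_self x
    rw [this]
    rw [qip_self_re] at h
    rw [← h]
    norm_cast

lemma qip_add_right {m : ℕ} (x y z : Fin m → ℍ[ℝ]) :
    qip x (y + z) = qip x y + qip x z := by
  simp [qip, mul_add, Finset.sum_add_distrib]

lemma qip_add_left {m : ℕ} (x y z : Fin m → ℍ[ℝ]) :
    qip (x + y) z = qip x z + qip y z := by
  simp [qip, add_mul, Finset.sum_add_distrib]

lemma qip_smul_right {m : ℕ} (r : ℝ) (x y : Fin m → ℍ[ℝ]) :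
    qip x (r • y) = r • qip x y := by
  simp [qip, Finset.smul_sum, mul_smul_comm]

lemma qip_smul_left {m : ℕ} (r : ℝ) (x y : Fin m → ℍ[ℝ]) :
    qip (r • x) y = r • qip x y := by
  simp [qip, Finset.smul_sum, smul_mul_assoc]

lemma qip_mulq_right {m : ℕ} (q : ℍ[ℝ]) (x y : Fin m → ℍ[ℝ]) :
    qip x (fun i => y i * q) = qip x y * q := by
  simp [qip, Finset.sum_mul, mul_assoc]

lemma qip_mulq_left {m : ℕ} (q : ℍ[ℝ]) (x y : Fin m → ℍ[ℝ]) :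
    qip (fun i => x i * q) y = star q * qip x y := by
  simp [qip, Finset.mul_sum, StarMul.star_mul, mul_assoc]

lemma qip_mulVec {m n : ℕ} (M : Matrix (Fin m) (Fin n) ℍ[ℝ]) (y : Fin m → ℍ[ℝ])
    (x : Fin n → ℍ[ℝ]) : qip y (M *ᵥ x) = qip (Mᴴ *ᵥ y) x := by
  simp only [qip, Matrix.mulVec, dotProduct, conjTranspose_apply,
    Finset.mul_sum, Finset.sum_mul, star_sum, StarMul.star_mul, star_star, mul_assoc]
  rw [Finset.sum_comm]

lemma qip_mulVec_left {m n : ℕ} (M : Matrix (Fin m) (Fin n) ℍ[ℝ]) (x : Fin n → ℍ[ℝ])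
    (y : Fin m → ℍ[ℝ]) : qip (M *ᵥ x) y = qip x (Mᴴ *ᵥ y) := by
  have := qip_mulVec Mᴴ x y
  rw [conjTranspose_conjTranspose] at this
  exact this.symm


/-! ### Right `ℍ`-module structure and dimension counting -/

abbrev Hop := ℍ[ℝ]ᵐᵒᵖ

/-- `ℍ` is isomorphic to `ℍᵐᵒᵖ` as a left `ℍᵐᵒᵖ`-module. -/
def opEquiv : Hop ≃ₗ[Hop] ℍ[ℝ] where
  toFun := MulOpposite.unop
  invFun := MulOpposite.op
  map_add' _ _ := rfl
  map_smul' _ _ := rfl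
  left_inv _ := rfl
  right_inv _ := rfl

def piOpBasis (n : ℕ) : Module.Basis (Fin n) Hop (Fin n → ℍ[ℝ]) :=
  (Pi.basisFun Hop (Fin n)).map (LinearEquiv.piCongrRight fun _ => opEquiv)

instance (n : ℕ) : FiniteDimensional Hop (Fin n → ℍ[ℝ]) :=
  Module.Finite.of_basis (piOpBasis n)

lemma finrank_pi (n : ℕ) : Module.finrank Hop (Fin n → ℍ[ℝ]) = n := by
  rw [Module.finrank_eq_card_basis (piOpBasis n), Fintype.card_fin]

/-- Pairing with a finite family, as a right-`ℍ`-linear map. -/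
def qipMap {n k : ℕ} (v : Fin k → (Fin n → ℍ[ℝ])) :
    (Fin n → ℍ[ℝ]) →ₗ[Hop] (Fin k → ℍ[ℝ]) where
  toFun x := fun i => qip (v i) x
  map_add' x y := by funext i; simp [qip_add_right]
  map_smul' c x := by
    funext i
    simp only [RingHom.id_apply, Pi.smul_apply, MulOpposite.smul_eq_mul_unop]
    have : c • x = fun j => x j * c.unop := by
      funext j; simp [MulOpposite.smul_eq_mul_unop]
    rw [this, qip_mulq_right]

/-- A family of fewer than `n` vectors has a nonzero common `qip`-annihilator. -/
lemma exists_orth {n k : ℕ} (hk : k < n) (v : Fin k → (Fin n → ℍ[ℝ])) :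
    ∃ x : Fin n → ℍ[ℝ], x ≠ 0 ∧ ∀ i, qip (v i) x = 0 := by
  have hni : ¬ Function.Injective (qipMap v) := by
    intro hinj
    have h1 : Module.finrank Hop (LinearMap.range (qipMap v)) = n := by
      rw [LinearMap.finrank_range_of_inj hinj, finrank_pi]
    have h2 : Module.finrank Hop (LinearMap.range (qipMap v)) ≤ k :=
      (Submodule.finrank_le _).trans_eq (finrank_pi k)
    omega
  rw [Function.not_injective_iff] at hni
  obtain ⟨x, y, hxy, hne⟩ := hni
  refine ⟨x - y, sub_ne_zero.mpr hne, fun i => ?_⟩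
  have : qipMap v (x - y) = 0 := by rw [map_sub, hxy, sub_self]
  exact congrFun this i

/-- An orthonormal family in `ℍ^m` has at most `m` elements. -/
lemma card_le_of_orthonormal {m r : ℕ} (u : Fin r → (Fin m → ℍ[ℝ]))
    (h : ∀ i j, qip (u i) (u j) = if i = j then 1 else 0) : r ≤ m := by
  let L : (Fin r → ℍ[ℝ]) →ₗ[Hop] (Fin m → ℍ[ℝ]) :=
    { toFun := fun c => fun i => ∑ j, u j i * c j
      map_add' := fun c d => by
        funext i; simp [mul_add, Finset.sum_add_distrib]
      map_smul' := fun q c => by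
        funext i
        simp only [RingHom.id_apply, Pi.smul_apply, MulOpposite.smul_eq_mul_unop,
          Finset.sum_mul, mul_assoc] }
  have hinj : Function.Injective L := by
    rw [injective_iff_map_eq_zero]
    intro c hc
    funext j0
    have h0 : qip (u j0) (L c) = 0 := by rw [hc]; simp [qip]
    have h1 : qip (u j0) (L c) = c j0 := by
      show qip (u j0) (fun i => ∑ j, u j i * c j) = c j0
      calc qip (u j0) (fun i => ∑ j, u j i * c j)
          = ∑ j, qip (u j0) (u j) * c j := by
            simp only [qip, Finset.mul_sum, Finset.sum_mul, mul_assoc]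
            exact Finset.sum_comm
        _ = c j0 := by simp [h]
    rw [h0] at h1; exact h1.symm
  have h1 : Module.finrank Hop (LinearMap.range L) = r := by
    rw [LinearMap.finrank_range_of_inj hinj, finrank_pi]
  have h2 : Module.finrank Hop (LinearMap.range L) ≤ m :=
    (Submodule.finrank_le _).trans_eq (finrank_pi m)
  omega

/-- `ℍ`-matrix algebra is Dedekind-finite. -/
lemma mul_eq_one_comm {p : ℕ} {A B : Matrix (Fin p) (Fin p) ℍ[ℝ]}
    (h : A * B = 1) : B * A = 1 := by
  let L : Matrix (Fin p) (Fin p) ℍ[ℝ] → (Fin p → ℍ[ℝ]) →ₗ[Hop] (Fin p → ℍ[ℝ]) :=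
    fun M =>
    { toFun := M.mulVec
      map_add' := fun x y => Matrix.mulVec_add M x y
      map_smul' := fun q x => by
        funext i
        simp only [RingHom.id_apply, Pi.smul_apply, MulOpposite.smul_eq_mul_unop,
          Matrix.mulVec, dotProduct, Finset.sum_mul, mul_assoc] }
  have hAB : ∀ x, A *ᵥ (B *ᵥ x) = x := by
    intro x; rw [Matrix.mulVec_mulVec, h, Matrix.one_mulVec]
  have hBinj : Function.Injective (L B) := by
    intro x y hxy
    have : A *ᵥ (B *ᵥ x) = A *ᵥ (B *ᵥ y) := by
      show A *ᵥ (L B x) = A *ᵥ (L B y); rw [hxy]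
    rwa [hAB, hAB] at this
  have hBsurj : Function.Surjective (L B) :=
    (LinearMap.injective_iff_surjective).mp hBinj
  have hBA : ∀ x, B *ᵥ (A *ᵥ x) = x := by
    intro x
    obtain ⟨y, hy⟩ := hBsurj x
    have hy' : B *ᵥ y = x := hy
    rw [← hy', hAB]
  have : ∀ x, (B * A) *ᵥ x = (1 : Matrix (Fin p) (Fin p) ℍ[ℝ]) *ᵥ x := by
    intro x; rw [← Matrix.mulVec_mulVec, hBA, Matrix.one_mulVec]
  apply Matrix.ext
  intro i j
  have h2 := congrFun (this (Pi.single j 1)) i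
  simpa [Matrix.mulVec_single] using h2


/-! ### More `qip` algebra -/

lemma qip_sub_right {m : ℕ} (x y z : Fin m → ℍ[ℝ]) :
    qip x (y - z) = qip x y - qip x z := by
  simp [qip, mul_sub, Finset.sum_sub_distrib]

lemma qip_zero_right {m : ℕ} (x : Fin m → ℍ[ℝ]) : qip x 0 = 0 := by simp [qip]

lemma qip_zero_left {m : ℕ} (x : Fin m → ℍ[ℝ]) : qip 0 x = 0 := by simp [qip]

lemma re_qip_comm {m : ℕ} (x y : Fin m → ℍ[ℝ]) : (qip x y).re = (qip y x).re := by
  rw [← qip_star y x, Quaternion.re_star]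

lemma linear_coeff_zero {a b : ℝ} (h : ∀ t : ℝ, 0 ≤ a * t + b * t ^ 2) : a = 0 := by
  by_contra ha
  have h1 := h 1
  have h2 := h (-1)
  have hb : 0 < b := by
    rcases lt_or_gt_of_ne ha with h' | h' <;> nlinarith
  have ht := h (-(a / (2 * b)))
  have hb' : b ≠ 0 := ne_of_gt hb
  have key : a * (-(a / (2 * b))) + b * (-(a / (2 * b))) ^ 2 = -(a ^ 2 / (4 * b)) := by
    field_simp; ring
  rw [key] at ht
  have hpos : 0 < a ^ 2 / (4 * b) := by positivity
  linarith

lemma continuous_qip_left {m : ℕ} (y : Fin m → ℍ[ℝ]) :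
    Continuous fun x : Fin m → ℍ[ℝ] => qip y x := by
  unfold qip
  exact continuous_finset_sum _ fun i _ => continuous_const.mul (continuous_apply i)

lemma continuous_rayleigh {n : ℕ} (H : Matrix (Fin n) (Fin n) ℍ[ℝ]) :
    Continuous fun x : Fin n → ℍ[ℝ] => (qip x (H *ᵥ x)).re := by
  apply Quaternion.continuous_re.comp
  unfold qip Matrix.mulVec dotProduct
  exact continuous_finset_sum _ fun i _ =>
    (continuous_star.comp (continuous_apply i)).mul
      (continuous_finset_sum _ fun j _ => continuous_const.mul (continuous_apply j))

lemma continuous_selfqip {m : ℕ} :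
    Continuous fun x : Fin m → ℍ[ℝ] => (qip x x).re := by
  apply Quaternion.continuous_re.comp
  unfold qip
  exact continuous_finset_sum _ fun i _ =>
    (continuous_star.comp (continuous_apply i)).mul (continuous_apply i)

/-! ### Existence of a unit eigenvector orthogonal to a given eigenfamily -/

lemma exists_next_eigen {n k : ℕ} (H : Matrix (Fin n) (Fin n) ℍ[ℝ]) (hH : Hᴴ = H)
    (hk : k < n) (v : Fin k → (Fin n → ℍ[ℝ])) (lam : Fin k → ℝ)
    (hortho : ∀ i j, qip (v i) (v j) = if i = j then 1 else 0)
    (heig : ∀ i, H *ᵥ v i = lam i • v i) :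
    ∃ (w : Fin n → ℍ[ℝ]) (lw : ℝ),
      qip w w = 1 ∧ (∀ i, qip (v i) w = 0) ∧ H *ᵥ w = lw • w := by
  classical
  set f : (Fin n → ℍ[ℝ]) → ℝ := fun x => (qip x (H *ᵥ x)).re with hf
  set C : Set (Fin n → ℍ[ℝ]) := {y | ∀ i, qip (v i) y = 0} with hC
  set K : Set (Fin n → ℍ[ℝ]) := {x | (qip x x).re = 1 ∧ x ∈ C} with hK
  -- scaling facts
  have hsmulC : ∀ (r : ℝ) (y : Fin n → ℍ[ℝ]), y ∈ C → r • y ∈ C := by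
    intro r y hy i; rw [qip_smul_right, hy i, smul_zero]
  have hfs : ∀ (r : ℝ) (y : Fin n → ℍ[ℝ]), f (r • y) = r ^ 2 * f y := by
    intro r y
    simp only [hf]
    rw [Matrix.mulVec_smul, qip_smul_left, qip_smul_right, Quaternion.re_smul,
      Quaternion.re_smul]
    simp [smul_eq_mul]; ring
  have hqs : ∀ (r : ℝ) (y : Fin n → ℍ[ℝ]), (qip (r • y) (r • y)).re = r ^ 2 * (qip y y).re := by
    intro r y
    rw [qip_smul_left, qip_smul_right, Quaternion.re_smul, Quaternion.re_smul]
    simp [smul_eq_mul]; ring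
  have hnormalize : ∀ y : Fin n → ℍ[ℝ], y ∈ C → y ≠ 0 →
      ((Real.sqrt (qip y y).re)⁻¹ • y) ∈ K := by
    intro y hy hne
    have hs : 0 < (qip y y).re := qip_self_re_pos hne
    refine ⟨?_, hsmulC _ y hy⟩
    rw [hqs]
    have h1 : Real.sqrt (qip y y).re ≠ 0 := by positivity
    rw [inv_pow, Real.sq_sqrt (le_of_lt hs)]
    field_simp
  -- K is nonempty
  obtain ⟨x₀, hx₀ne, hx₀⟩ := exists_orth hk v
  have hKne : K.Nonempty := ⟨_, hnormalize x₀ hx₀ hx₀ne⟩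
  -- K is compact
  have hKclosed : IsClosed K := by
    have h1 : IsClosed {x : Fin n → ℍ[ℝ] | (qip x x).re = 1} :=
      isClosed_eq continuous_selfqip continuous_const
    have h2 : IsClosed C := by
      have : C = ⋂ i, {y : Fin n → ℍ[ℝ] | qip (v i) y = 0} := by
        ext y; simp [hC, Set.mem_iInter]
      rw [this]
      exact isClosed_iInter fun i => isClosed_eq (continuous_qip_left (v i)) continuous_const
    exact h1.inter h2
  have hKbdd : Bornology.IsBounded K := by
    apply Bornology.IsBounded.subset (Metric.isBounded_closedBall (x := (0 : Fin n → ℍ[ℝ])) (r := 1))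
    intro x hx
    rw [Metric.mem_closedBall, dist_zero_right]
    rw [pi_norm_le_iff_of_nonneg zero_le_one]
    intro i
    have h1 : ‖x i‖ ^ 2 ≤ 1 := by
      have h2 : ‖x i‖ ^ 2 ≤ ∑ j, ‖x j‖ ^ 2 :=
        Finset.single_le_sum (f := fun j => ‖x j‖ ^ 2) (fun j _ => by positivity)
          (Finset.mem_univ i)
      rw [← qip_self_re, hx.1] at h2
      exact h2
    nlinarith [norm_nonneg (x i)]
  have hKcpt : IsCompact K := Metric.isCompact_of_isClosed_isBounded hKclosed hKbdd
  -- maximize the Rayleigh quotient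
  obtain ⟨w₀, hw₀K, hmax'⟩ :=
    hKcpt.exists_isMaxOn hKne ((continuous_rayleigh H).continuousOn)
  have hmax : ∀ y ∈ K, f y ≤ f w₀ := fun y hy => hmax' hy
  set lam0 : ℝ := f w₀ with hlam0
  -- key inequality on C
  have hkey : ∀ y ∈ C, f y ≤ lam0 * (qip y y).re := by
    intro y hy
    by_cases hne : y = 0
    · subst hne
      simp [hf, qip_zero_left, Matrix.mulVec_zero, qip_zero_right]
    · have hs : 0 < (qip y y).re := qip_self_re_pos hne
      have h1 := hmax _ (hnormalize y hy hne)
      rw [hfs] at h1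
      have h2 : (Real.sqrt (qip y y).re)⁻¹ ^ 2 = ((qip y y).re)⁻¹ := by
        rw [inv_pow, Real.sq_sqrt (le_of_lt hs)]
      rw [h2] at h1
      calc f y = (qip y y).re * (((qip y y).re)⁻¹ * f y) := by field_simp
        _ ≤ (qip y y).re * lam0 := by
            apply mul_le_mul_of_nonneg_left h1 (le_of_lt hs)
        _ = lam0 * (qip y y).re := mul_comm _ _
  -- the defect vector
  set wv : Fin n → ℍ[ℝ] := lam0 • w₀ - H *ᵥ w₀ with hwv
  have hreHcomm : ∀ y : Fin n → ℍ[ℝ], (qip w₀ (H *ᵥ y)).re = (qip y (H *ᵥ w₀)).re := by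
    intro y
    rw [qip_mulVec, hH, re_qip_comm, qip_mulVec, hH]
  have hqip_wv : ∀ y : Fin n → ℍ[ℝ],
      (qip y wv).re = lam0 * (qip y w₀).re - (qip y (H *ᵥ w₀)).re := by
    intro y
    rw [hwv, qip_sub_right, qip_smul_right]
    simp [Quaternion.re_smul, smul_eq_mul]
  -- orthogonality of the defect vector to C, real parts
  have hperp_re : ∀ y ∈ C, (qip y wv).re = 0 := by
    intro y hy
    have haz : 2 * (qip y wv).re = 0 := by
      apply linear_coeff_zero (b := lam0 * (qip y y).re - f y)
      intro t
      have hyt : w₀ + t • y ∈ C := by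
        intro i
        rw [qip_add_right, hw₀K.2 i, qip_smul_right, hy i, smul_zero, add_zero]
      have h1 := hkey _ hyt
      have hq : (qip (w₀ + t • y) (w₀ + t • y)).re
          = 1 + 2 * t * (qip y w₀).re + t ^ 2 * (qip y y).re := by
        rw [qip_add_left, qip_add_right, qip_add_right, qip_smul_right, qip_smul_left,
          qip_smul_left, qip_smul_right]
        simp only [Quaternion.re_add, Quaternion.re_smul, smul_eq_mul, smul_smul]
        rw [hw₀K.1]
        have := re_qip_comm w₀ y
        ring_nf
        rw [re_qip_comm y w₀]
        ring
      have hfq : f (w₀ + t • y)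
          = lam0 + 2 * t * (qip y (H *ᵥ w₀)).re + t ^ 2 * f y := by
        simp only [hf]
        rw [Matrix.mulVec_add, Matrix.mulVec_smul]
        rw [qip_add_left, qip_add_right, qip_add_right, qip_smul_right, qip_smul_left,
          qip_smul_left, qip_smul_right]
        simp only [Quaternion.re_add, Quaternion.re_smul, smul_eq_mul, smul_smul]
        have e1 : (qip w₀ (H *ᵥ w₀)).re = lam0 := rfl
        have e2 : (qip y (H *ᵥ y)).re = f y := rfl
        rw [e1, e2, hreHcomm y]
        ring
      have : 0 ≤ lam0 * (qip (w₀ + t • y) (w₀ + t • y)).re - f (w₀ + t • y) := by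
        linarith
      rw [hq, hfq] at this
      have hexp : lam0 * (1 + 2 * t * (qip y w₀).re + t ^ 2 * (qip y y).re)
          - (lam0 + 2 * t * (qip y (H *ᵥ w₀)).re + t ^ 2 * f y)
          = (2 * (qip y wv).re) * t + (lam0 * (qip y y).re - f y) * t ^ 2 := by
        rw [hqip_wv]; ring
      linarith [hexp ▸ this]
    linarith
  -- full orthogonality
  have hperp : ∀ y ∈ C, qip y wv = 0 := by
    intro y hy
    have hyq : (fun i => y i * qip y wv) ∈ C := by
      intro i
      rw [qip_mulq_right, hy i, zero_mul]
    have h := hperp_re _ hyq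
    rw [qip_mulq_left] at h
    rw [Quaternion.star_mul_self, Quaternion.re_coe] at h
    exact Quaternion.normSq_eq_zero.mp h
  -- the defect vector lies in C
  have hwvC : wv ∈ C := by
    intro i
    have h1 : qip (v i) (H *ᵥ w₀) = 0 := by
      rw [qip_mulVec, hH, heig i, qip_smul_left, hw₀K.2 i, smul_zero]
    rw [hwv, qip_sub_right, qip_smul_right, hw₀K.2 i, smul_zero, h1, sub_zero]
  have hwz : wv = 0 := (qip_self_eq_zero wv).mp (hperp wv hwvC)
  refine ⟨w₀, lam0, ?_, hw₀K.2, ?_⟩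
  · rw [qip_self]
    have h1 : (∑ i, ‖w₀ i‖ ^ 2 : ℝ) = 1 := by rw [← qip_self_re, hw₀K.1]
    rw [h1, Quaternion.coe_one]
  · have := sub_eq_zero.mp hwz
    exact this.symm


/-! ### Orthonormal families: snoc, full eigenfamilies, extension -/

lemma ortho_snoc {n k : ℕ} {v : Fin k → (Fin n → ℍ[ℝ])} {w : Fin n → ℍ[ℝ]}
    (hv : ∀ i j, qip (v i) (v j) = if i = j then 1 else 0)
    (hw : qip w w = 1) (hvw : ∀ i, qip (v i) w = 0) :
    ∀ i j : Fin (k + 1),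
      qip ((Fin.snoc v w : Fin (k + 1) → (Fin n → ℍ[ℝ])) i)
        ((Fin.snoc v w : Fin (k + 1) → (Fin n → ℍ[ℝ])) j) = if i = j then 1 else 0 := by
  intro i j
  refine Fin.lastCases ?_ (fun i' => ?_) i
  · refine Fin.lastCases ?_ (fun j' => ?_) j
    · simp [Fin.snoc_last, hw]
    · rw [Fin.snoc_last, Fin.snoc_castSucc, ← qip_star, hvw j', star_zero,
        if_neg (Fin.castSucc_lt_last j').ne']
  · refine Fin.lastCases ?_ (fun j' => ?_) j
    · rw [Fin.snoc_castSucc, Fin.snoc_last, hvw i', if_neg (Fin.castSucc_lt_last i').ne]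
    · rw [Fin.snoc_castSucc, Fin.snoc_castSucc, hv i' j']
      by_cases hij : i' = j'
      · simp [hij]
      · rw [if_neg hij, if_neg (fun hc => hij (Fin.castSucc_injective _ hc))]

lemma exists_eigenfamily {n : ℕ} (H : Matrix (Fin n) (Fin n) ℍ[ℝ]) (hH : Hᴴ = H) :
    ∀ k, k ≤ n → ∃ (v : Fin k → (Fin n → ℍ[ℝ])) (lam : Fin k → ℝ),
      (∀ i j, qip (v i) (v j) = if i = j then 1 else 0) ∧
      ∀ i, H *ᵥ v i = lam i • v i := by
  intro k
  induction k with
  | zero =>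
    intro _
    exact ⟨fun i => i.elim0, fun i => i.elim0, fun i => i.elim0, fun i => i.elim0⟩
  | succ k ih =>
    intro hk1
    obtain ⟨v, lam, hortho, heig⟩ := ih (Nat.le_of_succ_le hk1)
    obtain ⟨w, lw, hw1, hworth, hweig⟩ :=
      exists_next_eigen H hH (Nat.lt_of_succ_le hk1) v lam hortho heig
    refine ⟨Fin.snoc v w, Fin.snoc lam lw, ortho_snoc hortho hw1 hworth, ?_⟩
    intro i
    refine Fin.lastCases ?_ (fun i' => ?_) i
    · rw [Fin.snoc_last, Fin.snoc_last]
      exact hweig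
    · rw [Fin.snoc_castSucc, Fin.snoc_castSucc]
      exact heig i'

lemma unit_smul {m : ℕ} {x : Fin m → ℍ[ℝ]} (hx : x ≠ 0) :
    qip ((Real.sqrt (qip x x).re)⁻¹ • x) ((Real.sqrt (qip x x).re)⁻¹ • x) = 1 := by
  have hs : 0 < (qip x x).re := qip_self_re_pos hx
  rw [qip_smul_left, qip_smul_right, smul_smul, qip_self x]
  have hre : (qip x x).re = ∑ i, ‖x i‖ ^ 2 := qip_self_re x
  have key : ∀ r u : ℝ, r * u = 1 → r • ((u : ℝ) : ℍ[ℝ]) = 1 := by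
    intro r u h
    rw [← Quaternion.coe_smul, smul_eq_mul, h, Quaternion.coe_one]
  apply key
  rw [← hre, ← Real.sqrt_mul_self (le_of_lt hs)]
  have hsq : Real.sqrt (qip x x).re ≠ 0 := by positivity
  field_simp
  rw [Quaternion.re_coe, Real.sq_sqrt (Real.sqrt_nonneg _),
    div_self (Real.sqrt_pos.mpr (pow_pos hs 2)).ne']

lemma ortho_extend {m : ℕ} : ∀ d k, ∀ hkd : k + d = m, ∀ u₀ : Fin k → (Fin m → ℍ[ℝ]),
    (∀ i j, qip (u₀ i) (u₀ j) = if i = j then 1 else 0) →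
    ∃ u : Fin m → (Fin m → ℍ[ℝ]),
      (∀ i j, qip (u i) (u j) = if i = j then 1 else 0) ∧
      ∀ j : Fin k, u (Fin.castLE (by omega) j) = u₀ j := by
  intro d
  induction d with
  | zero =>
    intro k hk u₀ h
    have hkm : k = m := by omega
    subst hkm
    exact ⟨u₀, h, fun j => congrArg u₀ (Fin.ext rfl)⟩
  | succ d ih =>
    intro k hk u₀ h
    have hkm : k < m := by omega
    obtain ⟨x, hxne, hxorth⟩ := exists_orth hkm u₀
    set x' := (Real.sqrt (qip x x).re)⁻¹ • x with hx'
    have hx'1 : qip x' x' = 1 := unit_smul hxne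
    have hx'orth : ∀ i, qip (u₀ i) x' = 0 := fun i => by
      rw [hx', qip_smul_right, hxorth i, smul_zero]
    obtain ⟨u, hu, hext⟩ := ih (k + 1) (by omega) (Fin.snoc u₀ x')
      (ortho_snoc h hx'1 hx'orth)
    refine ⟨u, hu, fun j => ?_⟩
    have h2 := hext (Fin.castSucc j)
    rw [Fin.snoc_castSucc] at h2
    rw [show (Fin.castLE (by omega : k ≤ m) j)
        = Fin.castLE (by omega : k + 1 ≤ m) (Fin.castSucc j) from Fin.ext rfl]
    exact h2


/-! ### Sorting a predicate to an initial segment -/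

lemma exists_sort_perm {n : ℕ} (p : Fin n → Prop) [DecidablePred p] :
    ∃ e : Equiv.Perm (Fin n),
      ∀ j : Fin n, p (e j) ↔ (j : ℕ) < (Finset.univ.filter p).card := by
  classical
  set r := (Finset.univ.filter p).card with hr
  have hrn : r ≤ n := by
    calc r ≤ Finset.univ.card := Finset.card_filter_le _ _
      _ = n := Finset.card_fin n
  have hc1 : Fintype.card {x : Fin n // p x} = r := by
    rw [Fintype.card_subtype]
  have hc2 : Fintype.card {x : Fin n // ¬ p x} = n - r := by
    rw [Fintype.card_subtype_compl, Fintype.card_fin, hc1]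
  let e₁ : Fin r ≃ {x : Fin n // p x} := (Fintype.equivFinOfCardEq hc1).symm
  let e₂ : Fin (n - r) ≃ {x : Fin n // ¬ p x} := (Fintype.equivFinOfCardEq hc2).symm
  have hadd : r + (n - r) = n := by omega
  let e : Equiv.Perm (Fin n) :=
    (finCongr hadd.symm).trans
      ((finSumFinEquiv (m := r) (n := n - r)).symm.trans
        ((Equiv.sumCongr e₁ e₂).trans (Equiv.sumCompl p)))
  refine ⟨e, fun j => ?_⟩
  by_cases hj : (j : ℕ) < r
  · have h1 : (finSumFinEquiv (m := r) (n := n - r)).symm (finCongr hadd.symm j)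
        = Sum.inl ⟨(j : ℕ), hj⟩ := by
      rw [Equiv.symm_apply_eq]
      apply Fin.ext
      simp [finSumFinEquiv_apply_left, Fin.castAdd]
    have h2 : e j = ((e₁ ⟨(j : ℕ), hj⟩ : {x : Fin n // p x}) : Fin n) := by
      simp only [e, Equiv.trans_apply, h1, Equiv.sumCongr_apply, Sum.map_inl,
        Equiv.sumCompl_apply_inl]
    rw [h2]
    simpa [hj] using (e₁ ⟨(j : ℕ), hj⟩).prop
  · have hj2 : (j : ℕ) - r < n - r := by omega
    have h1 : (finSumFinEquiv (m := r) (n := n - r)).symm (finCongr hadd.symm j)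
        = Sum.inr ⟨(j : ℕ) - r, hj2⟩ := by
      rw [Equiv.symm_apply_eq]
      apply Fin.ext
      simp [finSumFinEquiv_apply_right, Fin.natAdd]
      omega
    have h2 : e j = ((e₂ ⟨(j : ℕ) - r, hj2⟩ : {x : Fin n // ¬ p x}) : Fin n) := by
      simp only [e, Equiv.trans_apply, h1, Equiv.sumCongr_apply, Sum.map_inr,
        Equiv.sumCompl_apply_inr]
    rw [h2]
    simpa [hj] using (e₂ ⟨(j : ℕ) - r, hj2⟩).prop


lemma real_smul_coe (r u : ℝ) : r • ((u : ℝ) : ℍ[ℝ]) = ((r * u : ℝ) : ℍ[ℝ]) := by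
  rw [← Quaternion.coe_smul, smul_eq_mul]

/-! ### Quaternion matrix SVD -/

theorem qsvd {m n : ℕ} (M : Matrix (Fin m) (Fin n) ℍ[ℝ]) :
    ∃ (U : Matrix (Fin m) (Fin m) ℍ[ℝ]) (D : Matrix (Fin m) (Fin n) ℍ[ℝ])
      (V : Matrix (Fin n) (Fin n) ℍ[ℝ]),
      (Uᴴ * U = 1 ∧ U * Uᴴ = 1) ∧ (Vᴴ * V = 1 ∧ V * Vᴴ = 1) ∧
      (∀ (i : Fin m) (j : Fin n), (i : ℕ) ≠ (j : ℕ) → D i j = 0) ∧ M = U * D * Vᴴ := by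
  classical
  set Hm : Matrix (Fin n) (Fin n) ℍ[ℝ] := Mᴴ * M with hHm
  have hH : Hmᴴ = Hm := by
    rw [hHm, Matrix.conjTranspose_mul, Matrix.conjTranspose_conjTranspose]
  obtain ⟨v0, lam0, hor0, hei0⟩ := exists_eigenfamily Hm hH n le_rfl
  obtain ⟨e, he⟩ := exists_sort_perm (fun j => lam0 j ≠ 0)
  set r := (Finset.univ.filter (fun j => lam0 j ≠ 0)).card with hrdef
  set v : Fin n → (Fin n → ℍ[ℝ]) := v0 ∘ e with hv
  set lam : Fin n → ℝ := lam0 ∘ e with hlam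
  have hsort : ∀ j : Fin n, lam j ≠ 0 ↔ (j : ℕ) < r := fun j => he j
  have hor : ∀ i j, qip (v i) (v j) = if i = j then 1 else 0 := by
    intro i j
    rw [hv]
    simp only [Function.comp_apply]
    rw [hor0 (e i) (e j)]
    by_cases h : i = j
    · simp [h]
    · rw [if_neg (fun hc => h (e.injective hc)), if_neg h]
  have hei : ∀ i, Hm *ᵥ v i = lam i • v i := fun i => hei0 (e i)
  set w : Fin n → (Fin m → ℍ[ℝ]) := fun j => M *ᵥ v j with hw
  have hww : ∀ i j, qip (w i) (w j) = if i = j then ((lam j : ℝ) : ℍ[ℝ]) else 0 := by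
    intro i j
    rw [hw]
    simp only
    rw [qip_mulVec_left, Matrix.mulVec_mulVec, ← hHm, hei j, qip_smul_right, hor i j]
    by_cases h : i = j
    · rw [if_pos h, if_pos h, ← Quaternion.coe_one, real_smul_coe, mul_one]
    · rw [if_neg h, if_neg h, smul_zero]
  have hlamnn : ∀ j, 0 ≤ lam j := by
    intro j
    have h1 := hww j j
    rw [if_pos rfl] at h1
    have h2 : (qip (w j) (w j)).re = lam j := by rw [h1, Quaternion.re_coe]
    rw [← h2]
    exact qip_self_re_nonneg _
  have hwzero : ∀ j : Fin n, ¬ (j : ℕ) < r → w j = 0 := by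
    intro j hj
    have hl : lam j = 0 := by
      by_contra hc; exact hj ((hsort j).mp hc)
    rw [← qip_self_eq_zero, hww j j, if_pos rfl, hl, Quaternion.coe_zero]
  have hrn : r ≤ n := by
    calc r ≤ Finset.univ.card := Finset.card_filter_le _ _
      _ = n := Finset.card_fin n
  set σf : Fin n → ℝ := fun j => Real.sqrt (lam j) with hσf
  have hσsq : ∀ j : Fin n, (j : ℕ) < r → (σf j)⁻¹ * ((σf j)⁻¹ * lam j) = 1 := by
    intro j hj
    have hl : lam j ≠ 0 := (hsort j).mpr hj
    have hlpos : 0 < lam j := lt_of_le_of_ne (hlamnn j) (Ne.symm hl)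
    have hs : σf j = Real.sqrt (lam j) := rfl
    have hσpos : 0 < σf j := by rw [hs]; exact Real.sqrt_pos.mpr hlpos
    rw [hs, ← mul_assoc, ← mul_inv]
    rw [← Real.sqrt_mul_self (le_of_lt hlpos)]
    field_simp
    rw [Real.sq_sqrt (Real.sqrt_nonneg _)]
  set u₀ : Fin r → (Fin m → ℍ[ℝ]) :=
    fun j => (σf (Fin.castLE hrn j))⁻¹ • w (Fin.castLE hrn j) with hu₀def
  have hu₀ : ∀ i j, qip (u₀ i) (u₀ j) = if i = j then 1 else 0 := by
    intro i j
    rw [hu₀def]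
    simp only
    rw [qip_smul_left, qip_smul_right, hww]
    by_cases h : i = j
    · subst h
      rw [if_pos rfl, if_pos rfl, real_smul_coe, real_smul_coe]
      have hj : ((Fin.castLE hrn i : Fin n) : ℕ) < r := i.2
      rw [hσsq _ hj, Quaternion.coe_one]
    · rw [if_neg (fun hc => h (Fin.castLE_injective hrn hc)), if_neg h,
        smul_zero, smul_zero]
  have hrm : r ≤ m := card_le_of_orthonormal u₀ hu₀
  obtain ⟨u, hu, huext⟩ := ortho_extend (m - r) r (by omega) u₀ hu₀
  set U : Matrix (Fin m) (Fin m) ℍ[ℝ] := Matrix.of fun i j => u j i with hU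
  set V : Matrix (Fin n) (Fin n) ℍ[ℝ] := Matrix.of fun i j => v j i with hV
  set D : Matrix (Fin m) (Fin n) ℍ[ℝ] :=
    Matrix.of fun i j => if (i : ℕ) = (j : ℕ) then ((σf j : ℝ) : ℍ[ℝ]) else 0 with hD
  have hUU : Uᴴ * U = 1 := by
    apply Matrix.ext
    intro i j
    have h1 := hu i j
    simpa [qip, hU, Matrix.mul_apply, Matrix.conjTranspose_apply, Matrix.one_apply]
      using h1
  have hVV : Vᴴ * V = 1 := by
    apply Matrix.ext
    intro i j
    have h1 := hor i j
    simpa [qip, hV, Matrix.mul_apply, Matrix.conjTranspose_apply, Matrix.one_apply]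
      using h1
  have hUU2 : U * Uᴴ = 1 := mul_eq_one_comm hUU
  have hVV2 : V * Vᴴ = 1 := mul_eq_one_comm hVV
  have hMV : M * V = U * D := by
    apply Matrix.ext
    intro i j
    have hlhs : (M * V) i j = w j i := by
      simp [hV, hw, Matrix.mul_apply, Matrix.mulVec, dotProduct]
    rw [hlhs]
    by_cases hjm : (j : ℕ) < m
    · have hrhs : (U * D) i j = u ⟨(j : ℕ), hjm⟩ i * ((σf j : ℝ) : ℍ[ℝ]) := by
        rw [Matrix.mul_apply]
        rw [Fintype.sum_eq_single (⟨(j : ℕ), hjm⟩ : Fin m)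
          (fun b hb => by
            have hbj : (b : ℕ) ≠ (j : ℕ) := fun hc => hb (Fin.ext hc)
            simp [hD, hU, hbj])]
        simp [hD, hU]
      rw [hrhs]
      by_cases hjr : (j : ℕ) < r
      · have h4 : Fin.castLE hrn ⟨(j : ℕ), hjr⟩ = j := Fin.ext rfl
        have h5 : u ⟨(j : ℕ), hjm⟩ i = (σf j)⁻¹ • w j i := by
          have h6 := huext ⟨(j : ℕ), hjr⟩
          have h7 : (Fin.castLE (by omega : r ≤ m) (⟨(j : ℕ), hjr⟩ : Fin r))
              = (⟨(j : ℕ), hjm⟩ : Fin m) := Fin.ext rfl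
          rw [h7] at h6
          rw [h6, hu₀def]
          simp only
          rw [h4]
          rfl
        rw [h5]
        have hl : lam j ≠ 0 := (hsort j).mpr hjr
        have hlpos : 0 < lam j := lt_of_le_of_ne (hlamnn j) (Ne.symm hl)
        have hσpos : 0 < σf j := Real.sqrt_pos.mpr hlpos
        rw [Quaternion.mul_coe_eq_smul, smul_smul, mul_inv_cancel₀ (ne_of_gt hσpos),
          one_smul]
      · have hwj : w j = 0 := hwzero j hjr
        have hl : lam j = 0 := by
          by_contra hc; exact hjr ((hsort j).mp hc)
        have hσ : σf j = 0 := by rw [hσf]; simp [hl]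
        rw [hσ, hwj, Quaternion.coe_zero, mul_zero]
        rfl
    · have hrhs : (U * D) i j = 0 := by
        rw [Matrix.mul_apply]
        apply Finset.sum_eq_zero
        intro k _
        have hkj : (k : ℕ) ≠ (j : ℕ) := by
          have := k.2; omega
        simp [hD, hkj]
      have hwj : w j = 0 := hwzero j (by omega)
      rw [hrhs, hwj]
      rfl
  refine ⟨U, D, V, ⟨hUU, hUU2⟩, ⟨hVV, hVV2⟩, fun i j hij => by simp [hD, hij], ?_⟩
  have hstep : M = M * (V * Vᴴ) := by rw [hVV2, Matrix.mul_one]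
  rw [hstep, ← Matrix.mul_assoc, hMV]


/-! ### Transform-domain inversion -/

lemma hat_inv {ι : Type*} [Fintype ι] [DecidableEq ι] (P Q : Matrix ι ι ℍ[ℝ])
    (hPQ : P * Q = 1) {m' n' : ℕ} (X : QT ι m' n') : hatT P (hatT Q X) = X := by
  funext ν i j
  show ∑ μ, P ν μ * (∑ ρ, Q μ ρ * X ρ i j) = X ν i j
  calc ∑ μ, P ν μ * (∑ ρ, Q μ ρ * X ρ i j)
      = ∑ μ, ∑ ρ, (P ν μ * Q μ ρ) * X ρ i j := by
        simp [Finset.mul_sum, mul_assoc]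
    _ = ∑ ρ, ∑ μ, (P ν μ * Q μ ρ) * X ρ i j := Finset.sum_comm
    _ = ∑ ρ, (P * Q) ν ρ * X ρ i j := by
        simp [Matrix.mul_apply, Finset.sum_mul]
    _ = X ν i j := by
        rw [hPQ]
        simp [Matrix.one_apply, ite_mul]

end QSVD

/-- TQt-SVD existence. -/
theorem stmt5 {ι : Type*} [Fintype ι] [DecidableEq ι]
    (T S : Matrix ι ι ℍ[ℝ]) (hST : S * T = 1) (hTS : T * S = 1)
    {N1 N2 : ℕ} (A : QT ι N1 N2) :
    ∃ (U : QT ι N1 N1) (D : QT ι N1 N2) (V : QT ι N2 N2),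
      qtUnitary T S U ∧ qtUnitary T S V ∧
      (∀ ν (i : Fin N1) (j : Fin N2), (i : ℕ) ≠ (j : ℕ) → hatT T D ν i j = 0) ∧
      A = qt T S U (qt T S D (qtH T S V)) := by
  classical
  have hinvTS : ∀ {m' n' : ℕ} (X : QT ι m' n'), hatT T (hatT S X) = X :=
    fun X => QSVD.hat_inv T S hTS X
  have hinvST : ∀ {m' n' : ℕ} (X : QT ι m' n'), hatT S (hatT T X) = X :=
    fun X => QSVD.hat_inv S T hST X
  have hqt : ∀ {m' p' n' : ℕ} (X : QT ι m' p') (Y : QT ι p' n'),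
      qt T S (hatT S X) (hatT S Y) = hatT S (fun ν => X ν * Y ν) := by
    intro m' p' n' X Y
    show hatT S (qf (hatT T (hatT S X)) (hatT T (hatT S Y))) = _
    rw [hinvTS X, hinvTS Y]
    rfl
  have hqtH : ∀ {m' n' : ℕ} (X : QT ι m' n'),
      qtH T S (hatT S X) = hatT S (fun ν => (X ν)ᴴ) := by
    intro m' n' X
    show hatT S (fun ν => (hatT T (hatT S X) ν)ᴴ) = _
    rw [hinvTS X]
  have hsvd := fun ν => QSVD.qsvd (hatT T A ν)
  choose Uf Df Vf hUu hVu hDd hAa using hsvd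
  refine ⟨hatT S Uf, hatT S Df, hatT S Vf, ⟨?_, ?_⟩, ⟨?_, ?_⟩, ?_, ?_⟩
  · rw [hqtH Uf, hqt (fun ν => (Uf ν)ᴴ) Uf]
    exact congrArg _ (funext fun ν => (hUu ν).1)
  · rw [hqtH Uf, hqt Uf (fun ν => (Uf ν)ᴴ)]
    exact congrArg _ (funext fun ν => (hUu ν).2)
  · rw [hqtH Vf, hqt (fun ν => (Vf ν)ᴴ) Vf]
    exact congrArg _ (funext fun ν => (hVu ν).1)
  · rw [hqtH Vf, hqt Vf (fun ν => (Vf ν)ᴴ)]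
    exact congrArg _ (funext fun ν => (hVu ν).2)
  · intro ν i j hij
    rw [hinvTS Df]
    exact hDd ν i j hij
  · rw [hqtH Vf, hqt Df (fun ν => (Vf ν)ᴴ), hqt Uf (fun ν => Df ν * (Vf ν)ᴴ)]
    have hstep : (fun ν => Uf ν * (Df ν * (Vf ν)ᴴ)) = hatT T A := by
      funext ν
      rw [← Matrix.mul_assoc, ← hAa ν]
    rw [hstep, hinvST A]


end
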